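/- Fix integers 1 ≤ i ≤ n. At every point x ∈ ℝⁿ the gradients ∇h_{i,0}(x), ∇h_{i,1}(x), …, ∇h_{i,i−1}(x) are linearly independent (so the level sets of the collection h_{i,0}, …, h_{i,i−1} are mutually transverse everywhere). In particular, for each 0 ≤ j ≤ i−1 the functions h_{i,j} − x_{j+1}, h_{i,j+1}, …, h_{i,i−1} do not depend on the variable x_{j+1}, while ∂h_{i,j}/∂x_{j+1} = 1 identically. -/

import Mathlib

open scoped ContDiff

noncomputable section

/-- The polynomial `h_i` in the variables `x_1, …, x_i` (0-indexed: it depends on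
coordinates `0, …, i-1`): `h_0 = 0`, `h_{i+1}(x) = x 0 - (h_i (x ∘ (·+1)))^2`. -/
def hpoly : ℕ → (ℕ → ℝ) → ℝ
  | 0, _ => 0
  | i + 1, x => x 0 - (hpoly i fun k => x (k + 1)) ^ 2

/-- Extension of a vector of `ℝⁿ` by zeros to an infinite sequence. -/
def extv {n : ℕ} (x : Fin n → ℝ) : ℕ → ℝ := fun k => if h : k < n then x ⟨k, h⟩ else 0

/-- `h_{i,j}` as a function on `ℝⁿ` (0-indexed: it depends on coordinates `j, …, i-1`;
in the paper's notation `h_{i,j}(x) = h_{i-j}(x_{j+1}, …, x_i)`). -/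
def hh (n i j : ℕ) (x : Fin n → ℝ) : ℝ := hpoly (i - j) fun k => extv x (j + k)

section StmtZeroAux

lemma extv_update {n : ℕ} (x : Fin n → ℝ) (c : Fin n) (t : ℝ) (p : ℕ) (hp : p ≠ (c : ℕ)) :
    extv (Function.update x c t) p = extv x p := by
  unfold extv
  split_ifs with h
  · rw [Function.update_of_ne (by simpa [Fin.ext_iff] using hp)]
  · rfl

lemma hh_update {n i m : ℕ} (c : Fin n) (hc : (c : ℕ) < m) (x : Fin n → ℝ) (t : ℝ) :
    hh n i m (Function.update x c t) = hh n i m x := by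
  unfold hh
  congr 1
  funext k
  exact extv_update _ _ _ _ (by omega)

lemma hh_stop {n i j : ℕ} (h : i ≤ j) : hh n i j = fun _ => 0 := by
  unfold hh
  rw [Nat.sub_eq_zero_of_le h]
  rfl

lemma hh_rec {n i j : ℕ} (hj : j < i) (hjn : j < n) (x : Fin n → ℝ) :
    hh n i j x = x ⟨j, hjn⟩ - (hh n i (j + 1) x) ^ 2 := by
  unfold hh
  have h1 : i - j = (i - (j + 1)) + 1 := by omega
  rw [h1]
  show extv x (j + 0) - (hpoly _ fun k => extv x (j + (k + 1))) ^ 2 = _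
  congr 1
  · simp [extv, hjn]
  · have he : (fun k => extv x (j + (k + 1))) = fun k => extv x (j + 1 + k) :=
      funext fun k => by rw [show j + (k + 1) = j + 1 + k by omega]
    rw [he]

lemma hh_diff {n i : ℕ} (hin : i ≤ n) :
    ∀ d j, i - j ≤ d → Differentiable ℝ (hh n i j) := by
  intro d
  induction d with
  | zero =>
    intro j hj
    rw [hh_stop (by omega)]
    exact differentiable_const 0
  | succ d ih =>
    intro j hj
    by_cases h : i ≤ j
    · rw [hh_stop h]; exact differentiable_const 0
    · push_neg at h
      have hjn : j < n := lt_of_lt_of_le h hin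
      have heq : hh n i j = fun x => x ⟨j, hjn⟩ - (hh n i (j + 1) x) ^ 2 :=
        funext (hh_rec h hjn)
      rw [heq]
      exact (differentiable_apply _).sub ((ih (j + 1) (by omega)).pow 2)

lemma hh_fderiv {n i j : ℕ} (hin : i ≤ n) (hj : j < i) (x : Fin n → ℝ) :
    fderiv ℝ (hh n i j) x =
      ContinuousLinearMap.proj ⟨j, lt_of_lt_of_le hj hin⟩
        - (2 * hh n i (j + 1) x) • fderiv ℝ (hh n i (j + 1)) x := by
  have hjn : j < n := lt_of_lt_of_le hj hin
  have h1 : HasFDerivAt (hh n i (j + 1)) (fderiv ℝ (hh n i (j + 1)) x) x :=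
    ((hh_diff hin (i - (j + 1)) (j + 1) le_rfl) x).hasFDerivAt
  have h2 : HasFDerivAt (fun y : Fin n → ℝ => y ⟨j, hjn⟩ - hh n i (j + 1) y * hh n i (j + 1) y)
      (ContinuousLinearMap.proj ⟨j, hjn⟩
        - (hh n i (j + 1) x • fderiv ℝ (hh n i (j + 1)) x
            + hh n i (j + 1) x • fderiv ℝ (hh n i (j + 1)) x)) x :=
    (ContinuousLinearMap.proj ⟨j, hjn⟩).hasFDerivAt.sub (h1.mul h1)
  have heq : hh n i j = fun y : Fin n → ℝ => y ⟨j, hjn⟩ - hh n i (j + 1) y * hh n i (j + 1) y :=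
    funext fun y => by rw [hh_rec hj hjn]; ring
  rw [heq, h2.fderiv, two_mul, add_smul]

lemma grad_lt {n i : ℕ} (hin : i ≤ n) :
    ∀ d j, i - j ≤ d → ∀ k : Fin n, (k : ℕ) < j → ∀ x : Fin n → ℝ,
      fderiv ℝ (hh n i j) x (Pi.single k 1) = 0 := by
  intro d
  induction d with
  | zero =>
    intro j hj k hk x
    rw [hh_stop (by omega)]
    simp
  | succ d ih =>
    intro j hj k hk x
    by_cases h : i ≤ j
    · rw [hh_stop h]; simp
    · push_neg at h
      have hjn : j < n := lt_of_lt_of_le h hin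
      rw [hh_fderiv hin h x]
      have hk' : (k : ℕ) < j + 1 := by omega
      have hne : k ≠ ⟨j, hjn⟩ := by simp [Fin.ext_iff]; omega
      have hne2 : (⟨j, hjn⟩ : Fin n) ≠ k := fun h => by
        have := congrArg Fin.val h; simp at this; omega
      have hs : Pi.single (M := fun _ : Fin n => ℝ) k 1 ⟨j, hjn⟩ = 0 := Pi.single_eq_of_ne hne2 1
      simp [ih (j + 1) (by omega) k hk' x, hs]

lemma grad_eq {n i j : ℕ} (hin : i ≤ n) (hj : j < i) (x : Fin n → ℝ) :
    fderiv ℝ (hh n i j) x (Pi.single ⟨j, lt_of_lt_of_le hj hin⟩ 1) = 1 := by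
  rw [hh_fderiv hin hj x]
  have := grad_lt hin (i - (j + 1)) (j + 1) le_rfl ⟨j, lt_of_lt_of_le hj hin⟩ (by simp) x
  simp [this]

end StmtZeroAux

/-- The gradient of a function on `ℝⁿ`, via the Fréchet derivative. -/
def grad {n : ℕ} (f : (Fin n → ℝ) → ℝ) (x : Fin n → ℝ) : Fin n → ℝ :=
  fun k => fderiv ℝ f x (Pi.single k 1)

/-- The `m`-th standard basis vector of `ℝⁿ` (zero if `m ≥ n`). -/
def evec (n m : ℕ) : Fin n → ℝ := fun k => if (k : ℕ) = m then 1 else 0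

/-- For `1 ≤ i ≤ n`, at every point `x ∈ ℝⁿ` the gradients
`∇h_{i,0}(x), …, ∇h_{i,i-1}(x)` are linearly independent.  In particular, for each
`0 ≤ j ≤ i-1` the functions `h_{i,j} - x_{j+1}, h_{i,j+1}, …, h_{i,i-1}` do not depend on the
variable `x_{j+1}`, while `∂h_{i,j}/∂x_{j+1} = 1` identically.
(0-indexed: the paper's variable `x_{j+1}` is coordinate `j`.) -/
theorem stmt_0 (n i : ℕ) (hi1 : 1 ≤ i) (hin : i ≤ n) :
    (∀ x : Fin n → ℝ,
      LinearIndependent ℝ (fun j : Fin i => grad (hh n i (j : ℕ)) x)) ∧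
    (∀ j : ℕ, ∀ hj : j < i,
      -- `h_{i,j} - x_{j+1}` does not depend on `x_{j+1}`
      (∀ (x : Fin n → ℝ) (t : ℝ),
        hh n i j (Function.update x ⟨j, lt_of_lt_of_le hj hin⟩ t) - t
          = hh n i j x - x ⟨j, lt_of_lt_of_le hj hin⟩) ∧
      -- `h_{i,m}` for `j < m ≤ i-1` does not depend on `x_{j+1}`
      (∀ m : ℕ, j < m → m < i → ∀ (x : Fin n → ℝ) (t : ℝ),
        hh n i m (Function.update x ⟨j, lt_of_lt_of_le hj hin⟩ t) = hh n i m x) ∧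
      -- `∂h_{i,j}/∂x_{j+1} = 1` identically
      (∀ x : Fin n → ℝ,
        fderiv ℝ (hh n i j) x (Pi.single ⟨j, lt_of_lt_of_le hj hin⟩ 1) = 1)) := by
  constructor
  · intro x
    rw [Fintype.linearIndependent_iff]
    intro c hc
    have key : ∀ m : ℕ, ∀ hm : m < i, c ⟨m, hm⟩ = 0 := by
      intro m
      induction m using Nat.strong_induction_on with
      | _ m ih =>
        intro hm
        have hmn : m < n := lt_of_lt_of_le hm hin
        have hx := congrFun hc ⟨m, hmn⟩
        rw [Finset.sum_apply] at hx
        rw [Finset.sum_eq_single (⟨m, hm⟩ : Fin i)] at hx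
        · simpa [grad, grad_eq hin hm x] using hx
        · intro b _ hb
          by_cases hbm : (b : ℕ) < m
          · have hb0 : c b = 0 := by
              have := ih (b : ℕ) hbm b.2
              simpa using this
            simp [hb0]
          · have hmb : m < (b : ℕ) := by
              rcases Nat.lt_or_ge m (b : ℕ) with h | h
              · exact h
              · exfalso; exact hb (by apply Fin.ext; simp; omega)
            simp [grad, grad_lt hin (i - (b : ℕ)) (b : ℕ) le_rfl ⟨m, hmn⟩ hmb x]
        · intro h; exact absurd (Finset.mem_univ _) h
    exact fun j => by simpa using key (j : ℕ) j.2
  · intro j hj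
    have hjn : j < n := lt_of_lt_of_le hj hin
    refine ⟨?_, ?_, ?_⟩
    · intro x t
      rw [hh_rec hj hjn, hh_rec hj hjn,
        hh_update (⟨j, lt_of_lt_of_le hj hin⟩ : Fin n) (Nat.lt_succ_self j)]
      simp [Function.update_self]
    · intro m hm hmi x t
      exact hh_update _ hm x t
    · intro x
      exact grad_eq hin hj x
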